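/- Fix an integer n > 2, α ∈ (0,1] and β ∈ (0,1). In the non-stationary crowdsourcing model, let â^β_i(t) = Σ_{s=1}^t (β(1−β)^{t−s} / ((n−1)α²)) Σ_{j≠i} 1{X_i(s) X_j(s) = 1}. Then for every t ≥ 1 and every ε ≥ 0: P( max_{i=1,…,n} | â^β_i(t) − E[â^β_i(t)] | ≥ ε ) ≤ 2n · exp( −2 ε² α⁴ / β ). -/

import Mathlib

open MeasureTheory Finset
open scoped Classical

/-- Probability of `(G(t), X(t)) = (g, x)` for one task with error probabilities `p`:
`G(t)` is uniform on `{+1,−1}` and, given `G(t) = g`, the labels are independent with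
`X_i(t) = g` w.p. `α(1−p_i)`, `X_i(t) = −g` w.p. `α p_i`, `X_i(t) = 0` w.p. `1−α`. -/
noncomputable def taskScore (n : ℕ) (α : ℝ) (p : Fin n → ℝ) (g : ℤ) (x : Fin n → ℤ) : ℝ :=
  (1 / 2 : ℝ) * ∏ i, (if x i = g then α * (1 - p i) else if x i = -g then α * p i else 1 - α)

/-- Exponentially weighted estimate `â^β_i(t)` of the agreement rate of labeller `i`,
with averaging parameter `β`. -/
noncomputable def abeta {Ω : Type*} (n : ℕ) (α β : ℝ) (X : ℕ → Fin n → Ω → ℤ)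
    (t : ℕ) (i : Fin n) (ω : Ω) : ℝ :=
  ∑ s ∈ Finset.Icc 1 t, (β * (1 - β) ^ (t - s) / (((n : ℝ) - 1) * α ^ 2)) *
    ∑ j ∈ Finset.univ.erase i, (if X s i ω * X s j ω = 1 then (1 : ℝ) else 0)

lemma hoeffding_core {θ : ℝ} (h0 : 0 ≤ θ) (h1 : θ ≤ 1) (h : ℝ) :
    1 - θ + θ * Real.exp h ≤ Real.exp (θ * h + h ^ 2 / 8) := by
  have hDpos : ∀ x : ℝ, 0 < 1 - θ + θ * Real.exp x := by
    intro x
    have hE := Real.exp_pos x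
    rcases le_or_gt (Real.exp x) 1 with hE1 | hE1
    · nlinarith [mul_nonneg (sub_nonneg.2 h1) (sub_nonneg.2 hE1)]
    · nlinarith [mul_nonneg h0 (by linarith : (0:ℝ) ≤ Real.exp x - 1)]
  have hDderiv : ∀ x : ℝ, HasDerivAt (fun x => 1 - θ + θ * Real.exp x) (θ * Real.exp x) x := by
    intro x
    have := ((Real.hasDerivAt_exp x).const_mul θ).const_add (1 - θ)
    simpa using this
  set g : ℝ → ℝ := fun x => θ * Real.exp x / (1 - θ + θ * Real.exp x) with hg
  have hgderiv : ∀ x, HasDerivAt g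
      (θ * Real.exp x * (1 - θ) / (1 - θ + θ * Real.exp x) ^ 2) x := by
    intro x
    have h1' : HasDerivAt (fun x => θ * Real.exp x) (θ * Real.exp x) x :=
      (Real.hasDerivAt_exp x).const_mul θ
    have := h1'.div (hDderiv x) (hDpos x).ne'
    refine this.congr_deriv ?_
    ring
  set u : ℝ → ℝ := fun x => x / 4 - g x with hu
  have huderiv : ∀ x, HasDerivAt u
      (1 / 4 - θ * Real.exp x * (1 - θ) / (1 - θ + θ * Real.exp x) ^ 2) x := by
    intro x
    exact ((hasDerivAt_id x).div_const 4).sub (hgderiv x)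
  have humono : Monotone u := by
    apply monotone_of_deriv_nonneg (fun x => (huderiv x).differentiableAt)
    intro x
    rw [(huderiv x).deriv, sub_nonneg, div_le_iff₀ (pow_pos (hDpos x) 2)]
    nlinarith [sq_nonneg (1 - θ - θ * Real.exp x), Real.exp_pos x]
  have hu0 : u 0 = -θ := by simp [hu, hg]
  set φ : ℝ → ℝ := fun x => θ * x + x ^ 2 / 8 - Real.log (1 - θ + θ * Real.exp x) with hφ
  have hφderiv : ∀ x, HasDerivAt φ (θ + x / 4 - g x) x := by
    intro x
    have hlog : HasDerivAt (fun x => Real.log (1 - θ + θ * Real.exp x))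
        (θ * Real.exp x / (1 - θ + θ * Real.exp x)) x := (hDderiv x).log (hDpos x).ne'
    have h4' : HasDerivAt (fun y : ℝ => θ * y) θ x := by
      simpa using (hasDerivAt_id x).const_mul θ
    have h3' := (h4'.add ((hasDerivAt_pow 2 x).div_const 8)).sub hlog
    refine h3'.congr_deriv ?_
    simp [hg]
    ring
  have hφcont : Continuous φ := by
    apply Continuous.sub (by continuity)
    exact (continuous_const.add (continuous_const.mul Real.continuous_exp)).log
      (fun x => (hDpos x).ne')
  have hφ0 : φ 0 = 0 := by simp [hφ]
  have hφnonneg : ∀ x, 0 ≤ φ x := by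
    intro x
    rcases le_or_gt 0 x with hx | hx
    · have hmono : MonotoneOn φ (Set.Ici 0) := by
        apply monotoneOn_of_deriv_nonneg (convex_Ici 0) hφcont.continuousOn
          (fun y _ => (hφderiv y).differentiableAt.differentiableWithinAt)
        intro y hy
        rw [interior_Ici] at hy
        rw [(hφderiv y).deriv]
        have h5 : u 0 ≤ u y := humono (le_of_lt hy)
        rw [hu0] at h5
        simp only [hu] at h5
        linarith
      have := hmono Set.self_mem_Ici (Set.mem_Ici.2 hx) hx
      rwa [hφ0] at this
    · have hanti : AntitoneOn φ (Set.Iic 0) := by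
        apply antitoneOn_of_deriv_nonpos (convex_Iic 0) hφcont.continuousOn
          (fun y _ => (hφderiv y).differentiableAt.differentiableWithinAt)
        intro y hy
        rw [interior_Iic] at hy
        rw [(hφderiv y).deriv]
        have h5 : u y ≤ u 0 := humono (le_of_lt hy)
        rw [hu0] at h5
        simp only [hu] at h5
        linarith
      have := hanti (Set.mem_Iic.2 hx.le) Set.self_mem_Iic hx.le
      rwa [hφ0] at this
  have hlog : Real.log (1 - θ + θ * Real.exp h) ≤ θ * h + h ^ 2 / 8 := by
    have := hφnonneg h
    simp only [hφ] at this
    linarith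
  calc 1 - θ + θ * Real.exp h = Real.exp (Real.log (1 - θ + θ * Real.exp h)) :=
        (Real.exp_log (hDpos h)).symm
    _ ≤ Real.exp (θ * h + h ^ 2 / 8) := Real.exp_le_exp.2 hlog


lemma hoeffding_step {V : Type*} (F : Finset V) (q f : V → ℝ)
    (hq0 : ∀ v ∈ F, 0 ≤ q v) (hq1 : ∑ v ∈ F, q v = 1)
    (a b lam : ℝ) (hab : a < b) (hf : ∀ v ∈ F, f v ∈ Set.Icc a b) :
    ∑ v ∈ F, q v * Real.exp (lam * f v) ≤
      Real.exp (lam * (∑ v ∈ F, q v * f v) + lam ^ 2 * (b - a) ^ 2 / 8) := by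
  have hba : (0:ℝ) < b - a := by linarith
  set m : ℝ := ∑ v ∈ F, q v * f v with hm
  have hpt : ∀ v ∈ F, Real.exp (lam * f v) ≤
      (b - f v) / (b - a) * Real.exp (lam * a) + (f v - a) / (b - a) * Real.exp (lam * b) := by
    intro v hv
    obtain ⟨hfa, hfb⟩ := hf v hv
    have w1 : (0:ℝ) ≤ (b - f v) / (b - a) := div_nonneg (by linarith) hba.le
    have w2 : (0:ℝ) ≤ (f v - a) / (b - a) := div_nonneg (by linarith) hba.le
    have hsum : (b - f v) / (b - a) + (f v - a) / (b - a) = 1 := by field_simp; ring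
    have := convexOn_exp.2 (Set.mem_univ (lam * a)) (Set.mem_univ (lam * b)) w1 w2 hsum
    simp only [smul_eq_mul] at this
    have harg : (b - f v) / (b - a) * (lam * a) + (f v - a) / (b - a) * (lam * b)
        = lam * f v := by
      field_simp
      ring
    rwa [harg] at this
  have hmean_a : a ≤ m := by
    rw [hm]
    calc a = ∑ v ∈ F, q v * a := by rw [← Finset.sum_mul, hq1, one_mul]
      _ ≤ ∑ v ∈ F, q v * f v := Finset.sum_le_sum fun v hv =>
          mul_le_mul_of_nonneg_left (hf v hv).1 (hq0 v hv)
  have hmean_b : m ≤ b := by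
    rw [hm]
    calc ∑ v ∈ F, q v * f v ≤ ∑ v ∈ F, q v * b := Finset.sum_le_sum fun v hv =>
          mul_le_mul_of_nonneg_left (hf v hv).2 (hq0 v hv)
      _ = b := by rw [← Finset.sum_mul, hq1, one_mul]
  have hqb : ∑ v ∈ F, q v * (b - f v) = b - m := by
    rw [hm]
    rw [Finset.sum_congr rfl (fun v _ => mul_sub (q v) b (f v)), Finset.sum_sub_distrib,
      ← Finset.sum_mul, hq1]
    ring
  have hqa : ∑ v ∈ F, q v * (f v - a) = m - a := by
    rw [hm]
    rw [Finset.sum_congr rfl (fun v _ => mul_sub (q v) (f v) a), Finset.sum_sub_distrib,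
      ← Finset.sum_mul, hq1]
    ring
  have hstep1 : ∑ v ∈ F, q v * Real.exp (lam * f v) ≤
      (b - m) / (b - a) * Real.exp (lam * a) + (m - a) / (b - a) * Real.exp (lam * b) := by
    calc ∑ v ∈ F, q v * Real.exp (lam * f v)
        ≤ ∑ v ∈ F, q v * ((b - f v) / (b - a) * Real.exp (lam * a)
            + (f v - a) / (b - a) * Real.exp (lam * b)) :=
          Finset.sum_le_sum fun v hv => mul_le_mul_of_nonneg_left (hpt v hv) (hq0 v hv)
      _ = ∑ v ∈ F, (q v * (b - f v) * (Real.exp (lam * a) / (b - a))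
            + q v * (f v - a) * (Real.exp (lam * b) / (b - a))) :=
          Finset.sum_congr rfl fun v _ => by ring
      _ = (∑ v ∈ F, q v * (b - f v)) * (Real.exp (lam * a) / (b - a))
            + (∑ v ∈ F, q v * (f v - a)) * (Real.exp (lam * b) / (b - a)) := by
          rw [Finset.sum_add_distrib, ← Finset.sum_mul, ← Finset.sum_mul]
      _ = (b - m) / (b - a) * Real.exp (lam * a) + (m - a) / (b - a) * Real.exp (lam * b) := by
          rw [hqa, hqb]; ring
  set θ : ℝ := (m - a) / (b - a) with hθ
  have hθ0 : 0 ≤ θ := div_nonneg (by linarith) hba.le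
  have hθ1 : θ ≤ 1 := by rw [hθ, div_le_one hba]; linarith
  have hcore := hoeffding_core hθ0 hθ1 (lam * (b - a))
  have h1θ : 1 - θ = (b - m) / (b - a) := by rw [hθ]; field_simp; ring
  have hfinal : (b - m) / (b - a) * Real.exp (lam * a) + (m - a) / (b - a) * Real.exp (lam * b)
      ≤ Real.exp (lam * m + lam ^ 2 * (b - a) ^ 2 / 8) := by
    have hexpand : (b - m) / (b - a) * Real.exp (lam * a) + (m - a) / (b - a) * Real.exp (lam * b)
        = Real.exp (lam * a) * (1 - θ + θ * Real.exp (lam * (b - a))) := by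
      have hb' : Real.exp (lam * b) = Real.exp (lam * a) * Real.exp (lam * (b - a)) := by
        rw [← Real.exp_add]; ring_nf
      rw [hb', h1θ, hθ]
      ring
    rw [hexpand]
    calc Real.exp (lam * a) * (1 - θ + θ * Real.exp (lam * (b - a)))
        ≤ Real.exp (lam * a) * Real.exp (θ * (lam * (b - a)) + (lam * (b - a)) ^ 2 / 8) :=
          mul_le_mul_of_nonneg_left hcore (Real.exp_pos _).le
      _ = Real.exp (lam * a + θ * (lam * (b - a)) + (lam * (b - a)) ^ 2 / 8) := by
          rw [← Real.exp_add]; ring_nf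
      _ = Real.exp (lam * m + lam ^ 2 * (b - a) ^ 2 / 8) := by
          congr 1
          have : θ * (b - a) = m - a := by rw [hθ]; field_simp
          have h2 : θ * (lam * (b - a)) = lam * (m - a) := by
            rw [mul_comm lam (b-a), ← mul_assoc, this]; ring
          rw [h2]; ring
  exact hstep1.trans hfinal


lemma fin_chernoff {κ V : Type*} [Fintype κ] [DecidableEq κ] (F : Finset V) (q f : κ → V → ℝ)
    (hq0 : ∀ k, ∀ v ∈ F, 0 ≤ q k v) (hq1 : ∀ k, ∑ v ∈ F, q k v = 1)
    (A B : κ → ℝ) (hAB : ∀ k, A k < B k)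
    (hf : ∀ k, ∀ v ∈ F, f k v ∈ Set.Icc (A k) (B k))
    (m : ℝ) (hm : m = ∑ k, ∑ v ∈ F, q k v * f k v)
    (ε D : ℝ) (hε : 0 ≤ ε) (hD0 : 0 < D) (hD : ∑ k, (B k - A k) ^ 2 ≤ D) :
    ∑ c ∈ (Fintype.piFinset fun _ : κ => F).filter (fun c => ε ≤ (∑ k, f k (c k)) - m),
      ∏ k, q k (c k) ≤ Real.exp (-2 * ε ^ 2 / D) := by
  set lam : ℝ := 4 * ε / D with hlam
  have hlam0 : 0 ≤ lam := by positivity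
  set P := Fintype.piFinset fun _ : κ => F with hP
  have hprod_nonneg : ∀ c ∈ P, 0 ≤ ∏ k, q k (c k) := by
    intro c hc
    exact Finset.prod_nonneg fun k _ => hq0 k (c k) (Fintype.mem_piFinset.1 hc k)
  -- step 1: indicator ≤ exponential
  have h1 : ∑ c ∈ P.filter (fun c => ε ≤ (∑ k, f k (c k)) - m), ∏ k, q k (c k)
      ≤ ∑ c ∈ P, (∏ k, q k (c k)) * Real.exp (lam * ((∑ k, f k (c k)) - m - ε)) := by
    calc ∑ c ∈ P.filter (fun c => ε ≤ (∑ k, f k (c k)) - m), ∏ k, q k (c k)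
        ≤ ∑ c ∈ P.filter (fun c => ε ≤ (∑ k, f k (c k)) - m),
            (∏ k, q k (c k)) * Real.exp (lam * ((∑ k, f k (c k)) - m - ε)) := by
          apply Finset.sum_le_sum
          intro c hc
          obtain ⟨hcP, hcε⟩ := Finset.mem_filter.1 hc
          have : (1:ℝ) ≤ Real.exp (lam * ((∑ k, f k (c k)) - m - ε)) := by
            rw [← Real.exp_zero]
            apply Real.exp_le_exp.2
            have : 0 ≤ (∑ k, f k (c k)) - m - ε := by linarith
            exact mul_nonneg hlam0 this
          nlinarith [hprod_nonneg c hcP]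
      _ ≤ ∑ c ∈ P, (∏ k, q k (c k)) * Real.exp (lam * ((∑ k, f k (c k)) - m - ε)) := by
          apply Finset.sum_le_sum_of_subset_of_nonneg (Finset.filter_subset _ _)
          intro c hc _
          exact mul_nonneg (hprod_nonneg c hc) (Real.exp_pos _).le
  -- step 2: factorize the mgf
  have h2 : ∑ c ∈ P, (∏ k, q k (c k)) * Real.exp (lam * (∑ k, f k (c k)))
      = ∏ k, ∑ v ∈ F, q k v * Real.exp (lam * f k v) := by
    rw [Finset.prod_univ_sum]
    apply Finset.sum_congr rfl
    intro c _
    rw [Finset.mul_sum, Real.exp_sum, ← Finset.prod_mul_distrib]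
  -- step 3: bound each factor
  have h3 : ∏ k, ∑ v ∈ F, q k v * Real.exp (lam * f k v)
      ≤ ∏ k, Real.exp (lam * (∑ v ∈ F, q k v * f k v) + lam ^ 2 * (B k - A k) ^ 2 / 8) := by
    apply Finset.prod_le_prod
    · intro k _
      exact Finset.sum_nonneg fun v hv => mul_nonneg (hq0 k v hv) (Real.exp_pos _).le
    · intro k _
      exact hoeffding_step F (q k) (f k) (hq0 k) (hq1 k) (A k) (B k) lam (hAB k) (hf k)
  have h4 : ∏ k, Real.exp (lam * (∑ v ∈ F, q k v * f k v) + lam ^ 2 * (B k - A k) ^ 2 / 8)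
      = Real.exp (lam * m + lam ^ 2 * (∑ k, (B k - A k) ^ 2) / 8) := by
    rw [← Real.exp_sum]
    congr 1
    rw [hm, Finset.sum_add_distrib, ← Finset.mul_sum, ← Finset.sum_div, ← Finset.mul_sum]
  -- combine
  have hcomb : ∑ c ∈ P, (∏ k, q k (c k)) * Real.exp (lam * ((∑ k, f k (c k)) - m - ε))
      = Real.exp (-(lam * (m + ε))) * ∑ c ∈ P, (∏ k, q k (c k)) *
          Real.exp (lam * (∑ k, f k (c k))) := by
    rw [Finset.mul_sum]
    apply Finset.sum_congr rfl
    intro c _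
    rw [mul_comm (Real.exp _) _, mul_assoc, ← Real.exp_add]
    congr 2
    ring
  calc ∑ c ∈ P.filter (fun c => ε ≤ (∑ k, f k (c k)) - m), ∏ k, q k (c k)
      ≤ ∑ c ∈ P, (∏ k, q k (c k)) * Real.exp (lam * ((∑ k, f k (c k)) - m - ε)) := h1
    _ = Real.exp (-(lam * (m + ε))) * ∑ c ∈ P, (∏ k, q k (c k)) *
          Real.exp (lam * (∑ k, f k (c k))) := hcomb
    _ ≤ Real.exp (-(lam * (m + ε))) *
          Real.exp (lam * m + lam ^ 2 * (∑ k, (B k - A k) ^ 2) / 8) := by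
        apply mul_le_mul_of_nonneg_left _ (Real.exp_pos _).le
        rw [h2, ← h4]
        exact h3
    _ = Real.exp (-(lam * ε) + lam ^ 2 * (∑ k, (B k - A k) ^ 2) / 8) := by
        rw [← Real.exp_add]; congr 1; ring
    _ ≤ Real.exp (-(lam * ε) + lam ^ 2 * D / 8) := by
        apply Real.exp_le_exp.2
        have : lam ^ 2 * (∑ k, (B k - A k) ^ 2) ≤ lam ^ 2 * D :=
          mul_le_mul_of_nonneg_left hD (sq_nonneg lam)
        linarith
    _ = Real.exp (-2 * ε ^ 2 / D) := by
        congr 1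
        rw [hlam]
        field_simp
        ring


lemma pi_mean_eq {κ V : Type*} [Fintype κ] [DecidableEq κ] (F : Finset V) (q f : κ → V → ℝ)
    (hq1 : ∀ k, ∑ v ∈ F, q k v = 1) :
    ∑ c ∈ Fintype.piFinset (fun _ : κ => F), (∏ k, q k (c k)) * (∑ k, f k (c k))
      = ∑ k, ∑ v ∈ F, q k v * f k v := by
  have key : ∀ k : κ, ∑ c ∈ Fintype.piFinset (fun _ : κ => F), (∏ j, q j (c j)) * f k (c k)
      = ∑ v ∈ F, q k v * f k v := by
    intro k
    set g : κ → V → ℝ := fun j v => if j = k then q j v * f j v else q j v with hg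
    have h1 : ∀ c : κ → V, (∏ j, q j (c j)) * f k (c k) = ∏ j, g j (c j) := by
      intro c
      have e1 : ∏ j, g j (c j) = g k (c k) * ∏ j ∈ univ.erase k, g j (c j) :=
        (Finset.mul_prod_erase univ _ (mem_univ k)).symm
      have e2 : ∏ j ∈ univ.erase k, g j (c j) = ∏ j ∈ univ.erase k, q j (c j) :=
        Finset.prod_congr rfl fun j hj => if_neg (Finset.ne_of_mem_erase hj)
      have e3 : ∏ j, q j (c j) = q k (c k) * ∏ j ∈ univ.erase k, q j (c j) :=
        (Finset.mul_prod_erase univ _ (mem_univ k)).symm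
      rw [e1, e2, e3]
      have : g k (c k) = q k (c k) * f k (c k) := by rw [hg]; simp
      rw [this]
      ring
    rw [Finset.sum_congr rfl (fun c _ => h1 c), ← Finset.prod_univ_sum]
    have e4 : ∏ j, ∑ v ∈ F, g j v
        = (∑ v ∈ F, g k v) * ∏ j ∈ univ.erase k, ∑ v ∈ F, g j v :=
      (Finset.mul_prod_erase univ _ (mem_univ k)).symm
    have e5 : ∏ j ∈ univ.erase k, ∑ v ∈ F, g j v = 1 := by
      apply Finset.prod_eq_one
      intro j hj
      have hgq : ∀ v ∈ F, g j v = q j v := fun v _ => if_neg (Finset.ne_of_mem_erase hj)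
      rw [Finset.sum_congr rfl hgq, hq1 j]
    have e6 : ∀ v ∈ F, g k v = q k v * f k v := fun v _ => if_pos rfl
    rw [e4, e5, mul_one, Finset.sum_congr rfl e6]
  calc ∑ c ∈ Fintype.piFinset (fun _ : κ => F), (∏ k, q k (c k)) * (∑ k, f k (c k))
      = ∑ c ∈ Fintype.piFinset (fun _ : κ => F), ∑ k, (∏ j, q j (c j)) * f k (c k) :=
        Finset.sum_congr rfl fun c _ => Finset.mul_sum _ _ _
    _ = ∑ k, ∑ c ∈ Fintype.piFinset (fun _ : κ => F), (∏ j, q j (c j)) * f k (c k) := by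
        rw [Finset.sum_comm]
    _ = ∑ k, ∑ v ∈ F, q k v * f k v := Finset.sum_congr rfl fun k _ => key k


/-- fluctuation bound: for every `ε ≥ 0`,
`P( max_i |â^β_i(t) − E[â^β_i(t)]| ≥ ε ) ≤ 2n exp(−2ε²α⁴/β)`. -/
theorem abeta_concentration
    {Ω : Type*} [MeasurableSpace Ω] (μ : Measure Ω) [IsProbabilityMeasure μ]
    (n : ℕ) (hn : 2 < n) (α : ℝ) (hα : α ∈ Set.Ioc (0 : ℝ) 1)
    (β : ℝ) (hβ : β ∈ Set.Ioo (0 : ℝ) 1) (σ : ℝ) (hσ : 0 ≤ σ)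
    (p : ℕ → Fin n → ℝ) (hp : ∀ t i, p t i ∈ Set.Icc (0 : ℝ) 1)
    -- the error probabilities vary at speed σ:
    (hspeed : ∀ (i : Fin n) (s t : ℕ), 1 ≤ s → 1 ≤ t →
      |p t i - p s i| ≤ σ * |(t : ℝ) - (s : ℝ)|)
    (G : ℕ → Ω → ℤ) (X : ℕ → Fin n → Ω → ℤ)
    (hGmeas : ∀ s, Measurable (G s)) (hXmeas : ∀ s i, Measurable (X s i))
    (hGval : ∀ s ω, G s ω = 1 ∨ G s ω = -1)
    (hXval : ∀ s i ω, X s i ω = -1 ∨ X s i ω = 0 ∨ X s i ω = 1)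
    -- tasks are independent with the per-task law given by p(s) at time s:
    (hlaw : ∀ (T : ℕ) (g : ℕ → ℤ) (x : ℕ → Fin n → ℤ),
      (∀ s, g s = 1 ∨ g s = -1) → (∀ s i, x s i = -1 ∨ x s i = 0 ∨ x s i = 1) →
      μ {ω | ∀ s ∈ Finset.Icc 1 T, (G s ω = g s ∧ ∀ i, X s i ω = x s i)} =
        ENNReal.ofReal (∏ s ∈ Finset.Icc 1 T, taskScore n α (p s) (g s) (x s)))
    -- agreement rates at time t:
    (a : ℕ → Fin n → ℝ)
    (ha : ∀ t i, a t i = (1 / ((n : ℝ) - 1)) * ∑ j ∈ Finset.univ.erase i,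
      (p t i * p t j + (1 - p t i) * (1 - p t j)))
    (t : ℕ) (ht : 1 ≤ t) (ε : ℝ) (hε : 0 ≤ ε) :
    μ {ω | ∃ i, ε ≤ |abeta n α β X t i ω - ∫ ω', abeta n α β X t i ω' ∂μ|}
      ≤ ENNReal.ofReal (2 * (n : ℝ) * Real.exp (-2 * ε ^ 2 * α ^ 4 / β)) := by
  classical
  obtain ⟨hα0, hα1⟩ := hα
  obtain ⟨hβ0, hβ1⟩ := hβ
  have hn1 : (1:ℝ) < (n:ℝ) := by exact_mod_cast hn.trans_le' one_lt_two.le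
  -- basic objects
  set F : Finset (ℤ × (Fin n → ℤ)) :=
    ({1, -1} : Finset ℤ) ×ˢ (Fintype.piFinset fun _ : Fin n => ({-1, 0, 1} : Finset ℤ)) with hF
  set W : ℕ → Ω → ℤ × (Fin n → ℤ) := fun s ω => (G s ω, fun i => X s i ω) with hW
  set q : Fin t → (ℤ × (Fin n → ℤ)) → ℝ :=
    fun k v => taskScore n α (p ((k:ℕ)+1)) v.1 v.2 with hq
  set P : Finset (Fin t → ℤ × (Fin n → ℤ)) := Fintype.piFinset fun _ : Fin t => F with hP
  set coef : Fin t → ℝ := fun k => β * (1 - β) ^ (t - ((k:ℕ)+1)) / (((n:ℝ) - 1) * α ^ 2)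
    with hcoef
  set f : Fin n → Fin t → (ℤ × (Fin n → ℤ)) → ℝ := fun i k v =>
    coef k * ∑ j ∈ Finset.univ.erase i, (if v.2 i * v.2 j = 1 then (1:ℝ) else 0) with hf
  set M : Fin t → ℝ := fun k => β * (1 - β) ^ (t - ((k:ℕ)+1)) / α ^ 2 with hM
  set Atom : (Fin t → ℤ × (Fin n → ℤ)) → Set Ω :=
    fun c => {ω | ∀ k : Fin t, W ((k:ℕ)+1) ω = c k} with hAtom
  set wt : (Fin t → ℤ × (Fin n → ℤ)) → ℝ := fun c => ∏ k, q k (c k) with hwt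
  -- reindexing
  have haux : ∀ (u : ℕ → ℝ), ∑ s ∈ Finset.Icc 1 t, u s = ∑ k : Fin t, u ((k:ℕ)+1) := by
    intro u
    rw [← Finset.Ico_add_one_right_eq_Icc, Finset.sum_Ico_eq_sum_range,
      Fin.sum_univ_eq_sum_range (fun k => u (k+1)) t]
    simp only [Nat.add_sub_cancel]
    exact Finset.sum_congr rfl fun k _ => by rw [add_comm]
  have hauxP : ∀ (u : ℕ → ℝ), ∏ s ∈ Finset.Icc 1 t, u s = ∏ k : Fin t, u ((k:ℕ)+1) := by
    intro u
    rw [← Finset.Ico_add_one_right_eq_Icc, Finset.prod_Ico_eq_prod_range,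
      Fin.prod_univ_eq_prod_range (fun k => u (k+1)) t]
    simp only [Nat.add_sub_cancel]
    exact Finset.prod_congr rfl fun k _ => by rw [add_comm]
  -- values of W lie in F
  have hWval : ∀ s ω, W s ω ∈ F := by
    intro s ω
    rw [hF, Finset.mem_product]
    constructor
    · rcases hGval s ω with h | h <;> simp [hW, h]
    · rw [Fintype.mem_piFinset]
      intro i
      rcases hXval s i ω with h | h | h <;> simp [hW, h]
  -- q is a probability vector on F
  have hq0 : ∀ (k : Fin t) (v : ℤ × (Fin n → ℤ)), 0 ≤ q k v := by
    intro k v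
    simp only [hq, taskScore]
    apply mul_nonneg (by norm_num)
    apply Finset.prod_nonneg
    intro i _
    split_ifs with h1 h2
    · exact mul_nonneg hα0.le (by linarith [(hp ((k:ℕ)+1) i).2])
    · exact mul_nonneg hα0.le (hp _ i).1
    · linarith
  have hq1 : ∀ k : Fin t, ∑ v ∈ F, q k v = 1 := by
    intro k
    rw [hF, Finset.sum_product]
    have hinner : ∀ g : ℤ, g = 1 ∨ g = -1 →
        ∑ x ∈ Fintype.piFinset (fun _ : Fin n => ({-1, 0, 1} : Finset ℤ)),
          q k (g, x) = 1 / 2 := by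
      intro g hg
      have hps := Finset.sum_prod_piFinset ({-1, 0, 1} : Finset ℤ)
        (fun (i : Fin n) (z : ℤ) => if z = g then α * (1 - p ((k:ℕ)+1) i)
          else if z = -g then α * p ((k:ℕ)+1) i else 1 - α)
      have hone : ∀ i : Fin n, ∑ z ∈ ({-1, 0, 1} : Finset ℤ),
          (if z = g then α * (1 - p ((k:ℕ)+1) i)
            else if z = -g then α * p ((k:ℕ)+1) i else 1 - α) = 1 := by
        intro i
        rcases hg with hg | hg <;> subst hg <;>
          · rw [show ({-1, 0, 1} : Finset ℤ) = insert (-1 : ℤ) (insert 0 {1}) from rfl,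
              Finset.sum_insert (by norm_num), Finset.sum_insert (by norm_num),
              Finset.sum_singleton]
            norm_num
            ring
      calc ∑ x ∈ Fintype.piFinset (fun _ : Fin n => ({-1, 0, 1} : Finset ℤ)), q k (g, x)
          = ∑ x ∈ Fintype.piFinset (fun _ : Fin n => ({-1, 0, 1} : Finset ℤ)),
            1 / 2 * ∏ i, (if x i = g then α * (1 - p ((k:ℕ)+1) i)
              else if x i = -g then α * p ((k:ℕ)+1) i else 1 - α) :=
            Finset.sum_congr rfl fun x _ => by simp only [hq, taskScore]
        _ = 1 / 2 * ∑ x ∈ Fintype.piFinset (fun _ : Fin n => ({-1, 0, 1} : Finset ℤ)),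
            ∏ i, (if x i = g then α * (1 - p ((k:ℕ)+1) i)
              else if x i = -g then α * p ((k:ℕ)+1) i else 1 - α) :=
            (Finset.mul_sum _ _ _).symm
        _ = 1 / 2 * ∏ i : Fin n, ∑ z ∈ ({-1, 0, 1} : Finset ℤ),
            (if z = g then α * (1 - p ((k:ℕ)+1) i)
              else if z = -g then α * p ((k:ℕ)+1) i else 1 - α) := by rw [hps]
        _ = 1 / 2 := by
            rw [Finset.prod_congr rfl (fun i _ => hone i), Finset.prod_const_one, mul_one]
    rw [show ({1, -1} : Finset ℤ) = insert (1:ℤ) {-1} from rfl,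
      Finset.sum_insert (by norm_num), Finset.sum_singleton,
      hinner 1 (Or.inl rfl), hinner (-1) (Or.inr rfl)]
    norm_num
  have hwt0 : ∀ c, 0 ≤ wt c := fun c => Finset.prod_nonneg fun k _ => hq0 k (c k)
  -- atoms
  have hAtomMeas : ∀ c, MeasurableSet (Atom c) := by
    intro c
    have heq : Atom c = ⋂ k : Fin t, ((G ((k:ℕ)+1)) ⁻¹' {(c k).1} ∩
        ⋂ i : Fin n, (X ((k:ℕ)+1) i) ⁻¹' {(c k).2 i}) := by
      ext ω
      simp only [hAtom, Set.mem_setOf_eq, Set.mem_iInter, Set.mem_inter_iff,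
        Set.mem_preimage, Set.mem_singleton_iff, hW, Prod.ext_iff, funext_iff]
    rw [heq]
    exact MeasurableSet.iInter fun k =>
      ((hGmeas _ (measurableSet_singleton _)).inter
        (MeasurableSet.iInter fun i => hXmeas _ i (measurableSet_singleton _)))
  have hmemAtom : ∀ ω : Ω, (fun k : Fin t => W ((k:ℕ)+1) ω) ∈ P := by
    intro ω
    exact Fintype.mem_piFinset.2 fun k => hWval _ ω
  have hAtomEq : ∀ (c : Fin t → ℤ × (Fin n → ℤ)) (ω : Ω), ω ∈ Atom c ↔
      c = fun k : Fin t => W ((k:ℕ)+1) ω := by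
    intro c ω
    constructor
    · intro h; funext k; exact (h k).symm
    · intro h k; rw [h]
  have hAtomMu : ∀ c ∈ P, μ (Atom c) = ENNReal.ofReal (wt c) := by
    intro c hc
    set gg : ℕ → ℤ × (Fin n → ℤ) :=
      fun s => if h : s - 1 < t ∧ 1 ≤ s then c ⟨s - 1, h.1⟩ else (1, fun _ => 1) with hgg
    have hggk : ∀ k : Fin t, gg ((k:ℕ)+1) = c k := by
      intro k
      simp only [hgg]
      have h : (k:ℕ)+1-1 < t ∧ 1 ≤ (k:ℕ)+1 := by
        refine ⟨?_, le_add_self⟩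
        simpa using k.isLt
      rw [dif_pos h]
      congr
    have hcF : ∀ m' : Fin t, c m' ∈ F := Fintype.mem_piFinset.1 hc
    have hgval : ∀ s, (gg s).1 = 1 ∨ (gg s).1 = -1 := by
      intro s
      simp only [hgg]
      split_ifs with h
      · have := hcF ⟨s-1, h.1⟩
        rw [hF, Finset.mem_product] at this
        have h1 := this.1
        simp only [Finset.mem_insert, Finset.mem_singleton] at h1
        exact h1
      · exact Or.inl rfl
    have hxval : ∀ s i, (gg s).2 i = -1 ∨ (gg s).2 i = 0 ∨ (gg s).2 i = 1 := by
      intro s i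
      simp only [hgg]
      split_ifs with h
      · have := hcF ⟨s-1, h.1⟩
        rw [hF, Finset.mem_product] at this
        have h2 := Fintype.mem_piFinset.1 this.2 i
        simp only [Finset.mem_insert, Finset.mem_singleton] at h2
        exact h2
      · exact Or.inr (Or.inr rfl)
    have hmu := hlaw t (fun s => (gg s).1) (fun s => (gg s).2) hgval hxval
    have hsetEq : {ω | ∀ s ∈ Finset.Icc 1 t, (G s ω = (gg s).1 ∧
        ∀ i, X s i ω = (gg s).2 i)} = Atom c := by
      ext ω
      simp only [Set.mem_setOf_eq, hAtom, Finset.mem_Icc]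
      constructor
      · intro h k
        have hk := h ((k:ℕ)+1) ⟨le_add_self, Nat.succ_le_of_lt k.isLt⟩
        rw [hggk k] at hk
        rw [hW]
        exact Prod.ext hk.1 (funext hk.2)
      · intro h s hs
        obtain ⟨hs1, hs2⟩ := hs
        have hk : s - 1 < t := by omega
        have hgg_s : gg s = c ⟨s-1, hk⟩ := by simp only [hgg]; rw [dif_pos ⟨hk, hs1⟩]
        have hWs := h ⟨s-1, hk⟩
        have hs' : (s - 1) + 1 = s := by omega
        have hcast : ((⟨s-1, hk⟩ : Fin t) : ℕ) + 1 = s := hs'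
        rw [hcast] at hWs
        rw [hgg_s, ← hWs, hW]
        exact ⟨rfl, fun i => rfl⟩
    rw [hsetEq] at hmu
    rw [hmu]
    congr 1
    rw [hauxP (fun s => taskScore n α (p s) (gg s).1 (gg s).2)]
    apply Finset.prod_congr rfl
    intro k _
    rw [hggk k]
  -- abeta as a function of the atoms
  have habeta : ∀ (i : Fin n) (ω : Ω),
      abeta n α β X t i ω = ∑ k, f i k (W ((k:ℕ)+1) ω) := by
    intro i ω
    show (∑ s ∈ Finset.Icc 1 t, (β * (1 - β) ^ (t - s) / (((n : ℝ) - 1) * α ^ 2)) *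
        ∑ j ∈ Finset.univ.erase i, (if X s i ω * X s j ω = 1 then (1 : ℝ) else 0)) = _
    rw [haux (fun s => (β * (1 - β) ^ (t - s) / (((n : ℝ) - 1) * α ^ 2)) *
        ∑ j ∈ Finset.univ.erase i, (if X s i ω * X s j ω = 1 then (1 : ℝ) else 0))]
  -- measure of cylinder events
  have hmeasPred : ∀ (Pred : (Fin t → ℤ × (Fin n → ℤ)) → Prop),
      μ {ω | Pred (fun k : Fin t => W ((k:ℕ)+1) ω)} =
        ENNReal.ofReal (∑ c ∈ P.filter Pred, wt c) := by
    intro Pred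
    have hset : {ω | Pred (fun k : Fin t => W ((k:ℕ)+1) ω)} =
        ⋃ c ∈ P.filter Pred, Atom c := by
      ext ω
      simp only [Set.mem_setOf_eq, Set.mem_iUnion, Finset.mem_filter, exists_prop]
      constructor
      · intro h
        exact ⟨fun k : Fin t => W ((k:ℕ)+1) ω, ⟨hmemAtom ω, h⟩, fun k => rfl⟩
      · rintro ⟨c, ⟨hcP, hcPred⟩, hω⟩
        have hce := (hAtomEq c ω).1 hω
        rwa [← hce]
    have hdisj : (↑(P.filter Pred) : Set (Fin t → ℤ × (Fin n → ℤ))).PairwiseDisjoint Atom := by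
      intro c _ c' _ hne
      rw [Function.onFun, Set.disjoint_left]
      intro ω h1 h2
      exact hne (((hAtomEq c ω).1 h1).trans ((hAtomEq c' ω).1 h2).symm)
    rw [hset, measure_biUnion_finset hdisj (fun c _ => hAtomMeas c),
      Finset.sum_congr rfl (fun c hc => hAtomMu c (Finset.mem_filter.1 hc).1)]
    exact (ENNReal.ofReal_sum_of_nonneg (fun c _ => hwt0 c)).symm
  -- integral of abeta
  have hint : ∀ i : Fin n, ∫ ω, abeta n α β X t i ω ∂μ
      = ∑ c ∈ P, wt c * (∑ k, f i k (c k)) := by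
    intro i
    have hfun : (fun ω => abeta n α β X t i ω) =
        fun ω => ∑ c ∈ P, (Atom c).indicator (fun _ => ∑ k, f i k (c k)) ω := by
      funext ω
      rw [habeta i ω]
      rw [Finset.sum_eq_single_of_mem (fun k : Fin t => W ((k:ℕ)+1) ω) (hmemAtom ω)]
      · rw [Set.indicator_of_mem ((hAtomEq _ ω).2 rfl)]
      · intro c hcP hne
        apply Set.indicator_of_notMem
        intro hω
        exact hne ((hAtomEq c ω).1 hω)
    rw [hfun, integral_finset_sum P (fun c _ => (integrable_const _).indicator (hAtomMeas c))]
    apply Finset.sum_congr rfl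
    intro c hc
    rw [integral_indicator_const _ (hAtomMeas c), measureReal_def, hAtomMu c hc,
      ENNReal.toReal_ofReal (hwt0 c), smul_eq_mul]
  -- mean
  set m : Fin n → ℝ := fun i => ∑ k, ∑ v ∈ F, q k v * f i k v with hm
  have hEm : ∀ i, ∫ ω, abeta n α β X t i ω ∂μ = m i := by
    intro i
    rw [hint i]
    simpa only [hP, hwt] using pi_mean_eq F q (f i) hq1
  -- bounds on f
  have hβ1' : (0:ℝ) < 1 - β := by linarith
  have hM0 : ∀ k, 0 < M k := by
    intro k
    rw [hM]
    exact div_pos (mul_pos hβ0 (pow_pos hβ1' _)) (pow_pos hα0 2)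
  have hn1' : ((n:ℝ) - 1) ≠ 0 := by linarith
  have hfb : ∀ (i : Fin n) (k : Fin t), ∀ v ∈ F, f i k v ∈ Set.Icc 0 (M k) := by
    intro i k v _
    have hcoef0 : 0 ≤ coef k := by
      rw [hcoef]
      exact div_nonneg (mul_nonneg hβ0.le (pow_nonneg (by linarith) _))
        (mul_nonneg (by linarith) (sq_nonneg α))
    have hS0 : 0 ≤ ∑ j ∈ Finset.univ.erase i, (if v.2 i * v.2 j = 1 then (1:ℝ) else 0) :=
      Finset.sum_nonneg fun j _ => by split_ifs <;> norm_num
    have hS1 : ∑ j ∈ Finset.univ.erase i, (if v.2 i * v.2 j = 1 then (1:ℝ) else 0)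
        ≤ (n:ℝ) - 1 := by
      calc ∑ j ∈ Finset.univ.erase i, (if v.2 i * v.2 j = 1 then (1:ℝ) else 0)
          ≤ ∑ _j ∈ Finset.univ.erase i, (1:ℝ) :=
            Finset.sum_le_sum fun j _ => by split_ifs <;> norm_num
        _ = ((Finset.univ.erase i).card : ℝ) := by rw [Finset.sum_const, nsmul_eq_mul, mul_one]
        _ = (n:ℝ) - 1 := by
            rw [Finset.card_erase_of_mem (Finset.mem_univ i), Finset.card_univ,
              Fintype.card_fin]
            have : (1:ℕ) ≤ n := by omega
            push_cast [Nat.cast_sub this]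
            ring
    constructor
    · exact mul_nonneg hcoef0 hS0
    · rw [hf]
      calc coef k * ∑ j ∈ Finset.univ.erase i, (if v.2 i * v.2 j = 1 then (1:ℝ) else 0)
          ≤ coef k * ((n:ℝ) - 1) := mul_le_mul_of_nonneg_left hS1 hcoef0
        _ = M k := by
            rw [hcoef, hM]
            field_simp
  have hMsum : ∑ k, (M k - 0) ^ 2 ≤ β / α ^ 4 := by
    have hterm : ∀ k : Fin t, (M k - 0) ^ 2
        = β ^ 2 / α ^ 4 * ((1-β)^2) ^ (t - ((k:ℕ)+1)) := by
      intro k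
      rw [hM, sub_zero, div_pow, ← pow_mul, ← pow_mul, mul_pow]
      ring_nf
    rw [Finset.sum_congr rfl fun k _ => hterm k, ← Finset.mul_sum]
    have hsum1 : ∑ k : Fin t, ((1-β)^2) ^ (t - ((k:ℕ)+1))
        = ∑ j ∈ Finset.range t, ((1-β)^2) ^ j := by
      rw [Fin.sum_univ_eq_sum_range (fun k => ((1-β)^2) ^ (t - (k+1))) t]
      rw [← Finset.sum_range_reflect (fun j => ((1-β)^2) ^ j) t]
      apply Finset.sum_congr rfl
      intro k hk
      congr 1
      omega
    rw [hsum1]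
    have hr0 : (0:ℝ) ≤ (1-β)^2 := sq_nonneg _
    have hr1 : (1-β)^2 < 1 := by nlinarith
    have hgeom : ∑ j ∈ Finset.range t, ((1-β)^2) ^ j ≤ 1 / (1 - (1-β)^2) := by
      rw [le_div_iff₀ (by linarith)]
      have := geom_sum_mul ((1-β)^2) t
      have hpow : (0:ℝ) ≤ ((1-β)^2) ^ t := pow_nonneg hr0 t
      nlinarith [this]
    have h2 : β ^ 2 / α ^ 4 * (1 / (1 - (1-β)^2)) ≤ β / α ^ 4 := by
      have hden : β ≤ 1 - (1-β)^2 := by nlinarith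
      have hden0 : (0:ℝ) < 1 - (1-β)^2 := by nlinarith
      rw [div_mul_eq_mul_div, mul_one_div, div_div]
      rw [div_le_div_iff₀ (by positivity) (by positivity)]
      nlinarith [mul_nonneg (mul_nonneg (pow_nonneg hα0.le 4) (sq_nonneg β))
        (by linarith : (0:ℝ) ≤ 1 - β)]
    calc β ^ 2 / α ^ 4 * ∑ j ∈ Finset.range t, ((1-β)^2) ^ j
        ≤ β ^ 2 / α ^ 4 * (1 / (1 - (1-β)^2)) :=
          mul_le_mul_of_nonneg_left hgeom (by positivity)
      _ ≤ β / α ^ 4 := h2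
  have hD0 : (0:ℝ) < β / α ^ 4 := by positivity
  have hexp_eq : -2 * ε ^ 2 / (β / α ^ 4) = -2 * ε ^ 2 * α ^ 4 / β := by
    field_simp
  -- the two tails
  have htail_up : ∀ i : Fin n,
      μ {ω | ε ≤ abeta n α β X t i ω - ∫ ω', abeta n α β X t i ω' ∂μ}
        ≤ ENNReal.ofReal (Real.exp (-2 * ε ^ 2 * α ^ 4 / β)) := by
    intro i
    have hset : {ω | ε ≤ abeta n α β X t i ω - ∫ ω', abeta n α β X t i ω' ∂μ} =
        {ω | ε ≤ (∑ k, f i k (W ((k:ℕ)+1) ω)) - m i} := by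
      ext ω
      simp only [Set.mem_setOf_eq]
      rw [habeta i ω, hEm i]
    have hμeq := hmeasPred (fun c : Fin t → ℤ × (Fin n → ℤ) => ε ≤ (∑ k, f i k (c k)) - m i)
    have hchern := fin_chernoff F q (f i) (fun k v _ => hq0 k v) hq1
      (fun _ => 0) M hM0 (fun k => hfb i k) (m i) (by simp only [hm]) ε (β / α ^ 4)
      hε hD0 hMsum
    calc μ {ω | ε ≤ abeta n α β X t i ω - ∫ ω', abeta n α β X t i ω' ∂μ}
        = μ {ω | ε ≤ (∑ k, f i k (W ((k:ℕ)+1) ω)) - m i} := by rw [hset]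
      _ = ENNReal.ofReal (∑ c ∈ P.filter
            (fun c => ε ≤ (∑ k, f i k (c k)) - m i), wt c) := hμeq
      _ ≤ ENNReal.ofReal (Real.exp (-2 * ε ^ 2 / (β / α ^ 4))) := by
          apply ENNReal.ofReal_le_ofReal
          simpa only [hP, hwt] using hchern
      _ = ENNReal.ofReal (Real.exp (-2 * ε ^ 2 * α ^ 4 / β)) := by rw [hexp_eq]
  have htail_dn : ∀ i : Fin n,
      μ {ω | ε ≤ (∫ ω', abeta n α β X t i ω' ∂μ) - abeta n α β X t i ω}
        ≤ ENNReal.ofReal (Real.exp (-2 * ε ^ 2 * α ^ 4 / β)) := by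
    intro i
    have hset : {ω | ε ≤ (∫ ω', abeta n α β X t i ω' ∂μ) - abeta n α β X t i ω} =
        {ω | ε ≤ (∑ k, -(f i k (W ((k:ℕ)+1) ω))) - (-(m i))} := by
      ext ω
      simp only [Set.mem_setOf_eq]
      rw [habeta i ω, hEm i, Finset.sum_neg_distrib]
      constructor <;> intro h' <;> linarith
    have hμeq := hmeasPred
      (fun c : Fin t → ℤ × (Fin n → ℤ) => ε ≤ (∑ k, -(f i k (c k))) - (-(m i)))
    have hm' : -(m i) = ∑ k, ∑ v ∈ F, q k v * -(f i k v) := by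
      simp only [hm, mul_neg, Finset.sum_neg_distrib]
    have hf' : ∀ k : Fin t, ∀ v ∈ F, -(f i k v) ∈ Set.Icc (-(M k)) 0 := by
      intro k v hv
      obtain ⟨h1, h2⟩ := hfb i k v hv
      exact ⟨neg_le_neg h2, neg_nonpos.2 h1⟩
    have hMsum' : ∑ k : Fin t, ((0:ℝ) - (-(M k))) ^ 2 ≤ β / α ^ 4 := by
      simpa using hMsum
    have hchern := fin_chernoff F q (fun k v => -(f i k v)) (fun k v _ => hq0 k v) hq1
      (fun k => -(M k)) (fun _ => 0) (fun k => neg_lt_zero.2 (hM0 k)) hf'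
      (-(m i)) hm' ε (β / α ^ 4) hε hD0 hMsum'
    calc μ {ω | ε ≤ (∫ ω', abeta n α β X t i ω' ∂μ) - abeta n α β X t i ω}
        = μ {ω | ε ≤ (∑ k, -(f i k (W ((k:ℕ)+1) ω))) - (-(m i))} := by rw [hset]
      _ = ENNReal.ofReal (∑ c ∈ P.filter
            (fun c => ε ≤ (∑ k, -(f i k (c k))) - (-(m i))), wt c) := hμeq
      _ ≤ ENNReal.ofReal (Real.exp (-2 * ε ^ 2 / (β / α ^ 4))) := by
          apply ENNReal.ofReal_le_ofReal
          simpa only [hP, hwt] using hchern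
      _ = ENNReal.ofReal (Real.exp (-2 * ε ^ 2 * α ^ 4 / β)) := by rw [hexp_eq]
  -- union bound
  set e : ℝ := Real.exp (-2 * ε ^ 2 * α ^ 4 / β) with he
  have he0 : 0 ≤ e := (Real.exp_pos _).le
  have hsub : {ω | ∃ i, ε ≤ |abeta n α β X t i ω - ∫ ω', abeta n α β X t i ω' ∂μ|}
      ⊆ ⋃ i ∈ (Finset.univ : Finset (Fin n)),
        ({ω | ε ≤ abeta n α β X t i ω - ∫ ω', abeta n α β X t i ω' ∂μ} ∪
          {ω | ε ≤ (∫ ω', abeta n α β X t i ω' ∂μ) - abeta n α β X t i ω}) := by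
    rintro ω ⟨i, hi⟩
    apply Set.mem_biUnion (Finset.mem_univ i)
    rcases le_abs.1 hi with h | h
    · exact Or.inl h
    · right
      rw [Set.mem_setOf_eq, ← neg_sub]
      exact h
  calc μ {ω | ∃ i, ε ≤ |abeta n α β X t i ω - ∫ ω', abeta n α β X t i ω' ∂μ|}
      ≤ μ (⋃ i ∈ (Finset.univ : Finset (Fin n)),
        ({ω | ε ≤ abeta n α β X t i ω - ∫ ω', abeta n α β X t i ω' ∂μ} ∪
          {ω | ε ≤ (∫ ω', abeta n α β X t i ω' ∂μ) - abeta n α β X t i ω})) :=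
        measure_mono hsub
    _ ≤ ∑ i ∈ (Finset.univ : Finset (Fin n)),
        μ ({ω | ε ≤ abeta n α β X t i ω - ∫ ω', abeta n α β X t i ω' ∂μ} ∪
          {ω | ε ≤ (∫ ω', abeta n α β X t i ω' ∂μ) - abeta n α β X t i ω}) :=
        measure_biUnion_finset_le _ _
    _ ≤ ∑ _i ∈ (Finset.univ : Finset (Fin n)),
        (ENNReal.ofReal e + ENNReal.ofReal e) :=
        Finset.sum_le_sum fun i _ =>
          (measure_union_le _ _).trans (add_le_add (htail_up i) (htail_dn i))
    _ = (n : ENNReal) * (ENNReal.ofReal e + ENNReal.ofReal e) := by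
        rw [Finset.sum_const, Finset.card_univ, Fintype.card_fin, nsmul_eq_mul]
    _ = ENNReal.ofReal (2 * (n : ℝ) * e) := by
        rw [← ENNReal.ofReal_add he0 he0, ← ENNReal.ofReal_natCast n,
          ← ENNReal.ofReal_mul (Nat.cast_nonneg n)]
        congr 1
        ring
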